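/- arXiv:2010.06331 — 5 statements merged into one kernel-verified Lean document; each statement's English description precedes it below -/
import Mathlib

section
/- If M, D, K ∈ ℝ^{n×n} are symmetric positive definite with D M⁻¹ K = K M⁻¹ D (modal damping), then there exists an invertible matrix X ∈ ℝ^{n×n} and diagonal matrices Ω > 0 and Ξ such that Xᵀ M X = Ω⁻¹, Xᵀ K X = Ω, and Xᵀ D X = 2Ξ. -/
open Matrix
open scoped MatrixOrder


lemma real_ct_eq_t {m k : Type*} (Q : Matrix m k ℝ) : Qᴴ = Qᵀ := by
  ext i j; simp [Matrix.conjTranspose_apply]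

lemma real_herm_transpose {n : ℕ} {P : Matrix (Fin n) (Fin n) ℝ} (h : P.IsHermitian) :
    Pᵀ = P := by rw [← real_ct_eq_t, h.eq]

lemma posdef_conj {n : ℕ} {K P : Matrix (Fin n) (Fin n) ℝ} (hK : K.PosDef)
    (hP : IsUnit P.det) : (Pᵀ * K * P).PosDef := by
  refine Matrix.posDef_iff_dotProduct_mulVec.mpr ⟨?_, ?_⟩
  · rw [show Pᵀ = Pᴴ from (real_ct_eq_t P).symm]
    exact Matrix.isHermitian_conjTranspose_mul_mul P hK.1
  · intro x hx
    have hPx : P *ᵥ x ≠ 0 := by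
      have hinj : Function.Injective (P.mulVec) :=
        Matrix.mulVec_injective_iff_isUnit.mpr ((Matrix.isUnit_iff_isUnit_det P).mpr hP)
      intro h
      exact hx (hinj (by simpa using h))
    have h0 := hK.dotProduct_mulVec_pos hPx
    have key : x ⬝ᵥ (Pᵀ * K * P) *ᵥ x = (P *ᵥ x) ⬝ᵥ K *ᵥ (P *ᵥ x) := by
      rw [← Matrix.mulVec_mulVec, ← Matrix.mulVec_mulVec, Matrix.dotProduct_mulVec,
        Matrix.vecMul_transpose]
    simpa [key] using h0


/-- Simultaneous orthogonal diagonalization of two commuting real symmetric matrices. -/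
lemma simul_diag_aux {n : ℕ} (A B : Matrix (Fin n) (Fin n) ℝ)
    (hA : A.IsHermitian) (hB : B.IsHermitian) (hAB : A * B = B * A) :
    ∃ (U : Matrix (Fin n) (Fin n) ℝ) (μ δ : Fin n → ℝ),
      Uᵀ * U = 1 ∧ A * U = U * Matrix.diagonal μ ∧ B * U = U * Matrix.diagonal δ := by
  classical
  set E := EuclideanSpace ℝ (Fin n)
  set A' := Matrix.toEuclideanLin A with hA'def
  set B' := Matrix.toEuclideanLin B with hB'def
  have hA' : A'.IsSymmetric := Matrix.isHermitian_iff_isSymmetric.1 hA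
  have hB' : B'.IsSymmetric := Matrix.isHermitian_iff_isSymmetric.1 hB
  have hcomm : Commute A' B' := by
    have : ∀ (C D : Matrix (Fin n) (Fin n) ℝ) (v : E),
        Matrix.toEuclideanLin C (Matrix.toEuclideanLin D v)
          = Matrix.toEuclideanLin (C * D) v := by
      intro C D v
      simp [Matrix.toEuclideanLin_apply, Matrix.mulVec_mulVec]
    ext v
    simp only [Module.End.mul_apply, hA'def, hB'def, this, hAB]
  set V : ℝ × ℝ → Submodule ℝ E :=
    fun i => Module.End.eigenspace A' i.2 ⊓ Module.End.eigenspace B' i.1 with hVdef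
  have hInt : DirectSum.IsInternal V :=
    hA'.directSum_isInternal_of_commute hB' hcomm
  have hOrth : OrthogonalFamily ℝ (fun i => V i) fun i => (V i).subtypeₗᵢ :=
    LinearMap.IsSymmetric.orthogonalFamily_eigenspace_inf_eigenspace hA' hB'
  haveI : Fintype {i : ℝ × ℝ // V i ≠ ⊥} :=
    hInt.submodule_iSupIndep.fintypeNeBotOfFiniteDimensional
  set W : {i : ℝ × ℝ // V i ≠ ⊥} → Submodule ℝ E := fun i => V i with hWdef
  have hIntW : DirectSum.IsInternal W := by
    rw [DirectSum.isInternal_submodule_iff_iSupIndep_and_iSup_eq_top]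
    refine ⟨hInt.submodule_iSupIndep.comp Subtype.coe_injective, ?_⟩
    rw [hWdef]
    rw [iSup_ne_bot_subtype]
    exact hInt.submodule_iSup_eq_top
  have hOrthW : OrthogonalFamily ℝ (fun i => W i) fun i => (W i).subtypeₗᵢ :=
    hOrth.comp Subtype.coe_injective
  have hn : Module.finrank ℝ E = n := finrank_euclideanSpace_fin
  set b := hIntW.subordinateOrthonormalBasis hn hOrthW with hbdef
  set idx : Fin n → {i : ℝ × ℝ // V i ≠ ⊥} :=
    fun a => hIntW.subordinateOrthonormalBasisIndex hn a hOrthW with hidxdef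
  have hsub : ∀ a, b a ∈ W (idx a) :=
    fun a => hIntW.subordinateOrthonormalBasis_subordinate hn a hOrthW
  set μ : Fin n → ℝ := fun a => ((idx a : ℝ × ℝ)).2 with hμdef
  set δ : Fin n → ℝ := fun a => ((idx a : ℝ × ℝ)).1 with hδdef
  have hAb : ∀ a, A' (b a) = μ a • b a := fun a =>
    Module.End.mem_eigenspace_iff.1 (hsub a).1
  have hBb : ∀ a, B' (b a) = δ a • b a := fun a =>
    Module.End.mem_eigenspace_iff.1 (hsub a).2
  refine ⟨Matrix.of fun i j => (b j : EuclideanSpace ℝ (Fin n)) i, μ, δ, ?_, ?_, ?_⟩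
  · ext i j
    have horth := b.orthonormal
    rw [orthonormal_iff_ite] at horth
    have := horth i j
    simp only [E, PiLp.inner_apply, RCLike.inner_apply, starRingEnd_apply, star_trivial] at this
    simp only [Matrix.mul_apply, Matrix.transpose_apply, Matrix.of_apply, Matrix.one_apply]
    simpa [mul_comm] using this
  · ext i j
    have h1 : (A *ᵥ (b j : Fin n → ℝ)) = μ j • (b j : Fin n → ℝ) := by
      have := hAb j
      rw [hA'def, Matrix.toEuclideanLin_apply] at this
      exact congrArg (WithLp.equiv 2 (Fin n → ℝ)) this
    have h2 := congrFun h1 i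
    simp only [Matrix.mulVec, dotProduct, Pi.smul_apply, smul_eq_mul] at h2
    rw [Matrix.mul_diagonal, Matrix.mul_apply]
    exact h2.trans (mul_comm _ _)
  · ext i j
    have h1 : (B *ᵥ (b j : Fin n → ℝ)) = δ j • (b j : Fin n → ℝ) := by
      have := hBb j
      rw [hB'def, Matrix.toEuclideanLin_apply] at this
      exact congrArg (WithLp.equiv 2 (Fin n → ℝ)) this
    have h2 := congrFun h1 i
    simp only [Matrix.mulVec, dotProduct, Pi.smul_apply, smul_eq_mul] at h2
    rw [Matrix.mul_diagonal, Matrix.mul_apply]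
    exact h2.trans (mul_comm _ _)

/-- Modally damped systems can be simultaneously diagonalized:
there is an invertible `X` with `Xᵀ M X = Ω⁻¹`, `Xᵀ K X = Ω`, `Xᵀ D X = 2Ξ`
for diagonal `Ω > 0` and diagonal `Ξ`. -/
theorem modal_damping_diagonalization {n : ℕ}
    (M D K : Matrix (Fin n) (Fin n) ℝ)
    (hM : M.PosDef) (hD : D.PosDef) (hK : K.PosDef)
    (hmodal : D * M⁻¹ * K = K * M⁻¹ * D) :
    ∃ (X : Matrix (Fin n) (Fin n) ℝ) (ω ξ : Fin n → ℝ),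
      IsUnit X.det ∧ (∀ i, 0 < ω i) ∧
      Xᵀ * M * X = (Matrix.diagonal ω)⁻¹ ∧
      Xᵀ * K * X = Matrix.diagonal ω ∧
      Xᵀ * D * X = (2 : ℝ) • Matrix.diagonal ξ := by
  classical
  set L := CFC.sqrt M with hLdef
  have hLL : L * L = M := CFC.sqrt_mul_sqrt_self M hM.posSemidef.nonneg
  have hLH : L.IsHermitian := (Matrix.nonneg_iff_posSemidef.mp (CFC.sqrt_nonneg M)).1
  have hLdet : IsUnit L.det := by
    have h1 : L.det * L.det = M.det := by rw [← Matrix.det_mul, hLL]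
    have hMdet : M.det ≠ 0 := hM.det_pos.ne'
    exact isUnit_iff_ne_zero.mpr fun h => hMdet (by rw [← h1, h, mul_zero])
  have hLiH : L⁻¹.IsHermitian := hLH.inv
  have hLiT : (L⁻¹)ᵀ = L⁻¹ := real_herm_transpose hLiH
  have hLi : L⁻¹ * L = 1 := Matrix.nonsing_inv_mul L hLdet
  have hLi' : L * L⁻¹ = 1 := Matrix.mul_nonsing_inv L hLdet
  have hLiLi : L⁻¹ * L⁻¹ = M⁻¹ := by rw [← Matrix.mul_inv_rev, hLL]
  have hLidet : IsUnit (L⁻¹).det := (Matrix.isUnit_nonsing_inv_det L hLdet)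
  set A := L⁻¹ * K * L⁻¹ with hAdef
  set B := L⁻¹ * D * L⁻¹ with hBdef
  have hA : A.PosDef := by
    have := posdef_conj hK hLidet
    rwa [hLiT] at this
  have hB : B.PosDef := by
    have := posdef_conj hD hLidet
    rwa [hLiT] at this
  have hABcomm : A * B = B * A := by
    have e1 : A * B = L⁻¹ * (K * M⁻¹ * D) * L⁻¹ := by
      simp only [hAdef, hBdef, ← hLiLi, Matrix.mul_assoc]
    have e2 : B * A = L⁻¹ * (D * M⁻¹ * K) * L⁻¹ := by
      simp only [hAdef, hBdef, ← hLiLi, Matrix.mul_assoc]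
    rw [e1, e2, hmodal]
  obtain ⟨U, μ, δ, hU1, hAU, hBU⟩ := simul_diag_aux A B hA.1 hB.1 hABcomm
  have hUdet : IsUnit U.det := by
    have h : Uᵀ.det * U.det = 1 := by rw [← Matrix.det_mul, hU1, Matrix.det_one]
    exact IsUnit.of_mul_eq_one _ (by rw [mul_comm]; exact h)
  have hUAU : Uᵀ * A * U = Matrix.diagonal μ := by
    rw [Matrix.mul_assoc, hAU, ← Matrix.mul_assoc, hU1, one_mul]
  have hUBU : Uᵀ * B * U = Matrix.diagonal δ := by
    rw [Matrix.mul_assoc, hBU, ← Matrix.mul_assoc, hU1, one_mul]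
  have hμpos : ∀ i, 0 < μ i := by
    have h := posdef_conj hA hUdet
    rw [hUAU] at h
    exact fun i => Matrix.posDef_diagonal_iff.mp h i
  set ω : Fin n → ℝ := fun i => Real.sqrt (μ i) with hωdef
  have hωpos : ∀ i, 0 < ω i := fun i => Real.sqrt_pos.mpr (hμpos i)
  have hωω : ∀ i, ω i * ω i = μ i := fun i => Real.mul_self_sqrt (hμpos i).le
  set s : Fin n → ℝ := fun i => Real.sqrt (ω i)⁻¹ with hsdef
  have hspos : ∀ i, 0 < s i := fun i => Real.sqrt_pos.mpr (inv_pos.mpr (hωpos i))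
  have hs2 : ∀ i, s i * s i = (ω i)⁻¹ := fun i => Real.mul_self_sqrt (inv_nonneg.mpr (hωpos i).le)
  set ξ : Fin n → ℝ := fun i => s i * δ i * s i / 2 with hξdef
  have hsdet : IsUnit (Matrix.diagonal s).det := by
    rw [Matrix.det_diagonal]
    exact isUnit_iff_ne_zero.mpr (Finset.prod_pos (fun i _ => hspos i)).ne'
  have key : ∀ P : Matrix (Fin n) (Fin n) ℝ,
      (L⁻¹ * U * Matrix.diagonal s)ᵀ * P * (L⁻¹ * U * Matrix.diagonal s)
        = Matrix.diagonal s * (Uᵀ * (L⁻¹ * P * L⁻¹) * U) * Matrix.diagonal s := by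
    intro P
    simp only [Matrix.transpose_mul, Matrix.diagonal_transpose, hLiT, Matrix.mul_assoc]
  have hMmid : L⁻¹ * M * L⁻¹ = 1 := by
    rw [← hLL, show L⁻¹ * (L * L) * L⁻¹ = (L⁻¹ * L) * (L * L⁻¹) by
      simp only [Matrix.mul_assoc], hLi, hLi', one_mul]
  refine ⟨L⁻¹ * U * Matrix.diagonal s, ω, ξ, ?_, hωpos, ?_, ?_, ?_⟩
  · rw [Matrix.det_mul, Matrix.det_mul]
    exact (hLidet.mul hUdet).mul hsdet
  · have hdiaginv : (Matrix.diagonal ω)⁻¹ = Matrix.diagonal (fun i => (ω i)⁻¹) := by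
      refine Matrix.inv_eq_right_inv ?_
      rw [Matrix.diagonal_mul_diagonal, ← Matrix.diagonal_one]
      exact congrArg _ (funext fun i => mul_inv_cancel₀ (hωpos i).ne')
    rw [key M, hMmid, Matrix.mul_one, hU1, Matrix.mul_one, Matrix.diagonal_mul_diagonal,
      hdiaginv]
    exact congrArg _ (funext fun i => hs2 i)
  · rw [key K, ← hAdef, hUAU, Matrix.diagonal_mul_diagonal, Matrix.diagonal_mul_diagonal]
    refine congrArg _ (funext fun i => ?_)
    show s i * μ i * s i = ω i
    calc s i * μ i * s i = (s i * s i) * μ i := by ring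
    _ = (ω i)⁻¹ * (ω i * ω i) := by rw [hs2 i, hωω i]
    _ = ω i := by field_simp
  · rw [key D, ← hBdef, hUBU, Matrix.diagonal_mul_diagonal, Matrix.diagonal_mul_diagonal,
      ← Matrix.diagonal_smul]
    refine congrArg _ (funext fun i => ?_)
    show s i * δ i * s i = ((2:ℝ) • ξ) i
    simp only [hξdef, Pi.smul_apply, smul_eq_mul]
    ring
end

section
/- Let M = LLᵀ and K = GGᵀ be Cholesky factorizations of symmetric positive definite matrices, and let D be symmetric positive semi-definite. Define the block matrices 𝒜 = [[0, Gᵀ L⁻ᵀ], [−L⁻¹ G, −L⁻¹ D L⁻ᵀ]], ℬ = [0; L⁻¹ B], 𝒞 = [0, Bᵀ L⁻ᵀ], and 𝒮 = diag(−Iₙ, Iₙ). Then 𝒜𝒮 = 𝒮𝒜ᵀ and 𝒞 = ℬᵀ𝒮. -/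
open Matrix

/-- The first-order form of a second-order system with co-located velocity
outputs has the internal symmetry structure `𝒜𝒮 = 𝒮𝒜ᵀ` and `𝒞 = ℬᵀ𝒮`,
where `𝒮 = diag(−Iₙ, Iₙ)`. -/
theorem first_order_symmetry_structure {n m : ℕ}
    (M D K : Matrix (Fin n) (Fin n) ℝ)
    (L G : Matrix (Fin n) (Fin n) ℝ) (B : Matrix (Fin n) (Fin m) ℝ)
    (hM : M.PosDef) (hK : K.PosDef) (hD : D.PosSemidef)
    (hL : IsUnit L.det) (hG : IsUnit G.det)
    (hMfac : M = L * Lᵀ) (hKfac : K = G * Gᵀ) :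
    let A : Matrix (Fin n ⊕ Fin n) (Fin n ⊕ Fin n) ℝ :=
      Matrix.fromBlocks 0 (Gᵀ * (L⁻¹)ᵀ) (-(L⁻¹ * G)) (-(L⁻¹ * D * (L⁻¹)ᵀ))
    let S : Matrix (Fin n ⊕ Fin n) (Fin n ⊕ Fin n) ℝ :=
      Matrix.fromBlocks (-1) 0 0 1
    let Bc : Matrix (Fin n ⊕ Fin n) (Fin m) ℝ :=
      Matrix.of fun i j => Sum.elim (fun _ => (0 : ℝ)) (fun i' => (L⁻¹ * B) i' j) i
    let Cc : Matrix (Fin m) (Fin n ⊕ Fin n) ℝ :=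
      Matrix.of fun i j => Sum.elim (fun _ => (0 : ℝ)) (fun j' => (Bᵀ * (L⁻¹)ᵀ) i j') j
    A * S = S * Aᵀ ∧ Cc = Bcᵀ * S := by
  intro A S Bc Cc
  have hD' : Dᵀ = D := hD.1
  constructor
  · show Matrix.fromBlocks 0 (Gᵀ * (L⁻¹)ᵀ) (-(L⁻¹ * G)) (-(L⁻¹ * D * (L⁻¹)ᵀ)) * S
      = S * (Matrix.fromBlocks 0 (Gᵀ * (L⁻¹)ᵀ) (-(L⁻¹ * G)) (-(L⁻¹ * D * (L⁻¹)ᵀ)))ᵀ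
    simp only [S, fromBlocks_transpose, fromBlocks_multiply, transpose_neg, transpose_mul,
      transpose_transpose, transpose_zero, hD', Matrix.mul_one, Matrix.one_mul,
      Matrix.mul_zero, Matrix.zero_mul, Matrix.mul_neg, Matrix.neg_mul, neg_neg,
      neg_zero, add_zero, zero_add, mul_assoc]
  · ext i j
    cases j <;> simp [Cc, Bc, S, mul_apply, Fintype.sum_sum_type, fromBlocks, one_apply, Finset.mul_sum, mul_comm, Finset.sum_ite_eq']
end

section
/- If a second-order system with M, D, K symmetric positive definite is overdamped, i.e., (vᵀDv)² > 4(vᵀMv)(vᵀKv) for all nonzero v ∈ ℝⁿ, then every eigenvalue λ ∈ ℂ of the quadratic pencil λ²M + λD + K is real and negative. -/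
open Matrix

set_option maxHeartbeats 1000000

private lemma dot_symm' {n : ℕ} (A : Matrix (Fin n) (Fin n) ℝ) (hA : A.IsHermitian)
    (a b : Fin n → ℝ) : a ⬝ᵥ A *ᵥ b = b ⬝ᵥ A *ᵥ a := by
  have h : ∀ i j, A j i = A i j := fun i j => congrFun (congrFun hA i) j
  simp only [dotProduct, mulVec, Finset.mul_sum]
  rw [Finset.sum_comm]
  exact Finset.sum_congr rfl fun i _ => Finset.sum_congr rfl fun j _ => by
    rw [h i j]; ring

private lemma quad_exp' {n : ℕ} (A : Matrix (Fin n) (Fin n) ℝ) (hA : A.IsHermitian)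
    (u w : Fin n → ℝ) (s t : ℝ) :
    (s • u + t • w) ⬝ᵥ A *ᵥ (s • u + t • w)
      = s^2 * (u ⬝ᵥ A *ᵥ u) + 2*s*t*(u ⬝ᵥ A *ᵥ w) + t^2 * (w ⬝ᵥ A *ᵥ w) := by
  simp [mulVec_add, mulVec_smul, dotProduct_add, add_dotProduct, smul_dotProduct,
    dotProduct_smul, smul_eq_mul, dot_symm' A hA w u]
  ring

private lemma dot_map' {n : ℕ} (A : Matrix (Fin n) (Fin n) ℝ) (v : Fin n → ℝ) (x : Fin n → ℂ) :
    (fun i => (v i : ℂ)) ⬝ᵥ (A.map Complex.ofReal) *ᵥ x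
      = ((v ⬝ᵥ A *ᵥ (fun i => (x i).re) : ℝ) : ℂ)
        + ((v ⬝ᵥ A *ᵥ (fun i => (x i).im) : ℝ) : ℂ) * Complex.I := by
  apply Complex.ext <;>
    simp [dotProduct, mulVec, Complex.ext_iff, Finset.mul_sum, Complex.re_sum, Complex.im_sum,
      mul_comm, mul_left_comm]

private lemma exists_root' (a b : ℝ) : ∃ t : ℝ, a + 2*t*b - t^2*a = 0 := by
  by_cases ha : a = 0
  · exact ⟨0, by rw [ha]; ring⟩
  · refine ⟨(b + Real.sqrt (b^2 + a^2))/a, ?_⟩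
    have hs : Real.sqrt (b^2 + a^2)^2 = b^2 + a^2 := Real.sq_sqrt (by positivity)
    field_simp
    nlinarith [hs]

private lemma cmplx_split' (lam : ℂ) (a b c d e f : ℝ)
    (h : lam^2 * (↑a + ↑b*Complex.I) + lam * (↑c + ↑d*Complex.I) + (↑e + ↑f*Complex.I) = 0) :
    ((lam.re^2 - lam.im^2)*a - 2*lam.re*lam.im*b + lam.re*c - lam.im*d + e = 0) ∧
    (2*lam.re*lam.im*a + (lam.re^2 - lam.im^2)*b + lam.im*c + lam.re*d + f = 0) := by
  have h1 := congrArg Complex.re h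
  have h2 := congrArg Complex.im h
  simp [pow_two, Complex.add_re, Complex.add_im, Complex.mul_re, Complex.mul_im] at h1 h2
  exact ⟨by linear_combination h1, by linear_combination h2⟩

/-- For an overdamped second-order system, every eigenvalue of the quadratic
pencil `λ²M + λD + K` is real and negative. -/
theorem overdamped_eigenvalues_real_negative {n : ℕ}
    (M D K : Matrix (Fin n) (Fin n) ℝ)
    (hM : M.PosDef) (hD : D.PosDef) (hK : K.PosDef)
    (hover : ∀ v : Fin n → ℝ, v ≠ 0 →
      4 * (v ⬝ᵥ M.mulVec v) * (v ⬝ᵥ K.mulVec v) < (v ⬝ᵥ D.mulVec v) ^ 2)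
    (lam : ℂ) (x : Fin n → ℂ) (hx : x ≠ 0)
    (heig : (lam ^ 2 • M.map (Complex.ofReal) + lam • D.map (Complex.ofReal)
        + K.map (Complex.ofReal)).mulVec x = 0) :
    lam.im = 0 ∧ lam.re < 0 := by
  classical
  have posdot : ∀ (A : Matrix (Fin n) (Fin n) ℝ), A.PosDef → ∀ v : Fin n → ℝ, v ≠ 0 →
      0 < v ⬝ᵥ A *ᵥ v := fun A hA v hv => by simpa using hA.dotProduct_mulVec_pos hv
  set u : Fin n → ℝ := fun i => (x i).re with hudef
  set w : Fin n → ℝ := fun i => (x i).im with hwdef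
  have key : ∀ v : Fin n → ℝ,
      lam^2 * (↑(v ⬝ᵥ M *ᵥ u) + ↑(v ⬝ᵥ M *ᵥ w)*Complex.I)
      + lam * (↑(v ⬝ᵥ D *ᵥ u) + ↑(v ⬝ᵥ D *ᵥ w)*Complex.I)
      + (↑(v ⬝ᵥ K *ᵥ u) + ↑(v ⬝ᵥ K *ᵥ w)*Complex.I) = 0 := by
    intro v
    have h0 : (fun i => (v i : ℂ)) ⬝ᵥ ((lam ^ 2 • M.map (Complex.ofReal)
        + lam • D.map (Complex.ofReal) + K.map (Complex.ofReal)) *ᵥ x) = 0 := by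
      rw [heig]; simp
    rw [add_mulVec, add_mulVec, smul_mulVec, smul_mulVec, dotProduct_add,
      dotProduct_add, dotProduct_smul, dotProduct_smul, dot_map', dot_map', dot_map'] at h0
    simpa [smul_eq_mul] using h0
  obtain ⟨e1, e3⟩ := cmplx_split' lam _ _ _ _ _ _ (key u)
  obtain ⟨e2, e4⟩ := cmplx_split' lam _ _ _ _ _ _ (key w)
  rw [dot_symm' M hM.1 w u] at e2 e4
  rw [dot_symm' D hD.1 w u] at e2 e4
  rw [dot_symm' K hK.1 w u] at e2
  set σ := lam.re with hσdef
  set τ := lam.im with hτdef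
  set mu := u ⬝ᵥ M *ᵥ u with hmu
  set muw := u ⬝ᵥ M *ᵥ w with hmuw
  set mw := w ⬝ᵥ M *ᵥ w with hmw
  set du := u ⬝ᵥ D *ᵥ u with hdu
  set duw := u ⬝ᵥ D *ᵥ w with hduw
  set dw := w ⬝ᵥ D *ᵥ w with hdw
  set ku := u ⬝ᵥ K *ᵥ u with hku
  set kuw := u ⬝ᵥ K *ᵥ w with hkuw
  set kw := w ⬝ᵥ K *ᵥ w with hkw
  have hx0 : ¬(u = 0 ∧ w = 0) := by
    rintro ⟨h1, h2⟩
    apply hx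
    funext i
    exact Complex.ext (congrFun h1 i) (congrFun h2 i)
  clear_value σ τ mu muw mw du duw dw ku kuw kw
  -- Step 1 : τ = 0
  have hτ : τ = 0 := by
    by_contra hτne
    have hτsq : 0 < τ^2 := by positivity
    have hRsum : 2*σ*mu + du + (2*σ*mw + dw) = 0 := by
      have h : τ * (2*σ*mu + du + (2*σ*mw + dw)) = 0 := by linear_combination e3 - e2
      rcases mul_eq_zero.1 h with h | h
      · exact absurd h hτne
      · exact h
    have hQsum : (σ^2 - τ^2)*(mu + mw) + σ*(du + dw) + (ku + kw) = 0 := by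
      linear_combination e1 + e4
    obtain ⟨t, ht⟩ := exists_root' (2*σ*mu + du) (2*σ*muw + duw)
    by_cases h1 : (1:ℝ) • u + t • w = 0
    · -- degenerate: u = (-t) • w
      have hu' : u = (-t) • w := by
        have h := h1
        rw [one_smul, add_eq_zero_iff_eq_neg] at h
        rw [h, neg_smul]
      have hw0 : w ≠ 0 := by
        intro hw
        exact hx0 ⟨by rw [hu', hw, smul_zero], hw⟩
      have hmuw' : muw = -t * mw := by
        rw [hmuw, hmw, hu']; simp [smul_dotProduct, smul_eq_mul]
      have hduw' : duw = -t * dw := by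
        rw [hduw, hdw, hu']; simp [smul_dotProduct, smul_eq_mul]
      have hkuw' : kuw = -t * kw := by
        rw [hkuw, hkw, hu']; simp [smul_dotProduct, smul_eq_mul]
      rw [hmuw', hduw'] at e2 e4
      rw [hkuw'] at e2
      have h5 : τ*(1+t^2)*(2*σ*mw+dw) = 0 := by linear_combination (-t)*e4 - e2
      have hRw0 : 2*σ*mw + dw = 0 := by
        rcases mul_eq_zero.1 h5 with h | h
        · rcases mul_eq_zero.1 h with h | h
          · exact absurd h hτne
          · linarith [sq_nonneg t]
        · exact h
      have hmwpos : 0 < mw := by rw [hmw]; exact posdot M hM w hw0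
      have hov' : 4*mw*kw < dw^2 := by
        have := hover w hw0; rw [← hmw, ← hkw, ← hdw] at this; exact this
      have hdw' : dw = -2*σ*mw := by linarith
      have hQ0 : σ^2*mw + σ*dw + kw = τ^2*mw := by
        linear_combination e4 + (τ*t)*hRw0
      have h6 : dw^2 = 4*σ^2*mw^2 := by rw [hdw']; ring
      have h7 : σ*dw = -2*(σ^2)*mw := by rw [hdw']; ring
      have h8 : kw = τ^2*mw + σ^2*mw := by linear_combination hQ0 - h7
      have h9 : 4*mw*kw = 4*τ^2*mw^2 + 4*σ^2*mw^2 := by linear_combination (4*mw)*h8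
      have h10 : 0 < τ^2*mw^2 := mul_pos hτsq (pow_pos hmwpos 2)
      linarith [hov', h6, h9, h10]
    · by_cases h2 : t • u + (-1:ℝ) • w = 0
      · -- degenerate: w = t • u
        have hw' : w = t • u := by
          have h := h2
          rw [neg_one_smul, add_neg_eq_zero] at h
          exact h.symm
        have hu0 : u ≠ 0 := by
          intro hu
          exact hx0 ⟨hu, by rw [hw', hu, smul_zero]⟩
        have hmuw' : muw = t * mu := by
          rw [hmuw, hmu, hw']; simp [mulVec_smul, smul_eq_mul]
        have hduw' : duw = t * du := by
          rw [hduw, hdu, hw']; simp [mulVec_smul, smul_eq_mul]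
        have hkuw' : kuw = t * ku := by
          rw [hkuw, hku, hw']; simp [mulVec_smul, smul_eq_mul]
        rw [hmuw', hduw'] at e1 e3
        rw [hkuw'] at e3
        have h5 : τ*(1+t^2)*(2*σ*mu+du) = 0 := by linear_combination e3 - t*e1
        have hRu0 : 2*σ*mu + du = 0 := by
          rcases mul_eq_zero.1 h5 with h | h
          · rcases mul_eq_zero.1 h with h | h
            · exact absurd h hτne
            · linarith [sq_nonneg t]
          · exact h
        have hmupos : 0 < mu := by rw [hmu]; exact posdot M hM u hu0
        have hov' : 4*mu*ku < du^2 := by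
          have := hover u hu0; rw [← hmu, ← hku, ← hdu] at this; exact this
        have hdu' : du = -2*σ*mu := by linarith
        have hQ0 : σ^2*mu + σ*du + ku = τ^2*mu := by
          linear_combination e1 + (τ*t)*hRu0
        have h6 : du^2 = 4*σ^2*mu^2 := by rw [hdu']; ring
        have h7 : σ*du = -2*(σ^2)*mu := by rw [hdu']; ring
        have h8 : ku = τ^2*mu + σ^2*mu := by linear_combination hQ0 - h7
        have h9 : 4*mu*ku = 4*τ^2*mu^2 + 4*σ^2*mu^2 := by linear_combination (4*mu)*h8
        have h10 : 0 < τ^2*mu^2 := mul_pos hτsq (pow_pos hmupos 2)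
        linarith [hov', h6, h9, h10]
      · -- main case
        have hm1 := quad_exp' M hM.1 u w 1 t
        have hd1 := quad_exp' D hD.1 u w 1 t
        have hk1 := quad_exp' K hK.1 u w 1 t
        have hm2 := quad_exp' M hM.1 u w t (-1)
        have hd2 := quad_exp' D hD.1 u w t (-1)
        have hk2 := quad_exp' K hK.1 u w t (-1)
        rw [← hmu, ← hmuw, ← hmw] at hm1 hm2
        rw [← hdu, ← hduw, ← hdw] at hd1 hd2
        rw [← hku, ← hkuw, ← hkw] at hk1 hk2
        obtain ⟨m1, hm1e⟩ : ∃ a : ℝ, a = 1^2*mu + 2*1*t*muw + t^2*mw := ⟨_, rfl⟩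
        obtain ⟨d1, hd1e⟩ : ∃ a : ℝ, a = 1^2*du + 2*1*t*duw + t^2*dw := ⟨_, rfl⟩
        obtain ⟨k1, hk1e⟩ : ∃ a : ℝ, a = 1^2*ku + 2*1*t*kuw + t^2*kw := ⟨_, rfl⟩
        obtain ⟨m2, hm2e⟩ : ∃ a : ℝ, a = t^2*mu + 2*t*(-1)*muw + (-1)^2*mw := ⟨_, rfl⟩
        obtain ⟨d2, hd2e⟩ : ∃ a : ℝ, a = t^2*du + 2*t*(-1)*duw + (-1)^2*dw := ⟨_, rfl⟩
        obtain ⟨k2, hk2e⟩ : ∃ a : ℝ, a = t^2*ku + 2*t*(-1)*kuw + (-1)^2*kw := ⟨_, rfl⟩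
        rw [← hm1e] at hm1
        rw [← hm2e] at hm2
        rw [← hd1e] at hd1
        rw [← hd2e] at hd2
        rw [← hk1e] at hk1
        rw [← hk2e] at hk2
        have m1pos : 0 < m1 := by rw [← hm1]; exact posdot M hM _ h1
        have m2pos : 0 < m2 := by rw [← hm2]; exact posdot M hM _ h2
        have ov1 : 4*m1*k1 < d1^2 := by
          have := hover _ h1; rw [hm1, hk1, hd1] at this; exact this
        have ov2 : 4*m2*k2 < d2^2 := by
          have := hover _ h2; rw [hm2, hk2, hd2] at this; exact this
        have hd1R : d1 = -2*σ*m1 := by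
          rw [hd1e, hm1e]; linear_combination ht + t^2 * hRsum
        have hd2R : d2 = -2*σ*m2 := by
          rw [hd2e, hm2e]; linear_combination -ht + hRsum
        have k1lt : k1 < σ^2*m1 := by
          have h6 : d1^2 = 4*σ^2*m1^2 := by rw [hd1R]; ring
          by_contra hc
          push_neg at hc
          have h7 : 0 ≤ 4*m1*(k1 - σ^2*m1) := by 
            have := mul_nonneg m1pos.le (sub_nonneg.2 hc)
            linarith [this]
          linarith [ov1, h6, h7]
        have k2lt : k2 < σ^2*m2 := by
          have h6 : d2^2 = 4*σ^2*m2^2 := by rw [hd2R]; ring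
          by_contra hc
          push_neg at hc
          have h7 : 0 ≤ 4*m2*(k2 - σ^2*m2) := by 
            have := mul_nonneg m2pos.le (sub_nonneg.2 hc)
            linarith [this]
          linarith [ov2, h6, h7]
        have hsum : (σ^2-τ^2)*(m1+m2) + σ*(d1+d2) + (k1+k2) = 0 := by
          rw [hm1e, hm2e, hd1e, hd2e, hk1e, hk2e]
          linear_combination (1+t^2)*hQsum
        have hsum2 : k1 + k2 = (σ^2+τ^2)*(m1+m2) := by
          linear_combination hsum - σ*hd1R - σ*hd2R
        have hp1 : 0 < τ^2*m1 := mul_pos hτsq m1pos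
        have hp2 : 0 < τ^2*m2 := mul_pos hτsq m2pos
        have h11 : k1 + k2 = σ^2*m1 + σ^2*m2 + τ^2*m1 + τ^2*m2 := by
          linear_combination hsum2
        linarith [k1lt, k2lt, hp1, hp2, h11]
  -- Step 2 : σ < 0
  refine ⟨hτ, ?_⟩
  rw [hτ] at e1 e4
  by_contra hσ
  push_neg at hσ
  rcases not_and_or.1 hx0 with hu0 | hw0
  · have hmupos : 0 < mu := by rw [hmu]; exact posdot M hM u hu0
    have hdupos : 0 < du := by rw [hdu]; exact posdot D hD u hu0
    have hkupos : 0 < ku := by rw [hku]; exact posdot K hK u hu0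
    have h7 : 0 ≤ σ*du := mul_nonneg hσ hdupos.le
    have h8 : 0 ≤ σ^2*mu := mul_nonneg (sq_nonneg σ) hmupos.le
    linarith [e1, hkupos, h7, h8]
  · have hmwpos : 0 < mw := by rw [hmw]; exact posdot M hM w hw0
    have hdwpos : 0 < dw := by rw [hdw]; exact posdot D hD w hw0
    have hkwpos : 0 < kw := by rw [hkw]; exact posdot K hK w hw0
    have h7 : 0 ≤ σ*dw := mul_nonneg hσ hdwpos.le
    have h8 : 0 ≤ σ^2*mw := mul_nonneg (sq_nonneg σ) hmwpos.le
    linarith [e4, hkwpos, h7, h8]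
end

section
/- If M, D, K are symmetric positive definite and the system is modally damped (D M⁻¹ K = K M⁻¹ D), then M⁻¹D and M⁻¹K commute, and M⁻¹D, M⁻¹K are simultaneously diagonalizable by a basis that is M-orthogonal. -/
open Matrix

/-- Under modal damping `D M⁻¹ K = K M⁻¹ D`, the matrices `M⁻¹D` and `M⁻¹K`
commute and are simultaneously diagonalizable by an `M`-orthogonal basis. -/
theorem modal_damping_commute_simultaneously_diagonalizable {n : ℕ}
    (M D K : Matrix (Fin n) (Fin n) ℝ)
    (hM : M.PosDef) (hD : D.PosDef) (hK : K.PosDef)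
    (hmodal : D * M⁻¹ * K = K * M⁻¹ * D) :
    (M⁻¹ * D) * (M⁻¹ * K) = (M⁻¹ * K) * (M⁻¹ * D) ∧
    ∃ (X : Matrix (Fin n) (Fin n) ℝ) (d e : Fin n → ℝ),
      IsUnit X.det ∧
      (M⁻¹ * D) * X = X * Matrix.diagonal d ∧
      (M⁻¹ * K) * X = X * Matrix.diagonal e ∧
      (∀ i j, i ≠ j → (Xᵀ * M * X) i j = 0) := by
  classical
  have hcomm : (M⁻¹ * D) * (M⁻¹ * K) = (M⁻¹ * K) * (M⁻¹ * D) := by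
    calc (M⁻¹ * D) * (M⁻¹ * K) = M⁻¹ * (D * M⁻¹ * K) := by simp [Matrix.mul_assoc]
      _ = M⁻¹ * (K * M⁻¹ * D) := by rw [hmodal]
      _ = (M⁻¹ * K) * (M⁻¹ * D) := by simp [Matrix.mul_assoc]
  refine ⟨hcomm, ?_⟩
  open scoped MatrixOrder in
  set S : Matrix (Fin n) (Fin n) ℝ := CFC.sqrt M with hSdef
  open scoped MatrixOrder in
  have hS2 : S * S = M := CFC.sqrt_mul_sqrt_self M hM.posSemidef.nonneg
  open scoped MatrixOrder in
  have hSherm : S.IsHermitian := (CFC.sqrt_nonneg M).posSemidef.isHermitian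
  have hSsymm : Sᵀ = S := by
    rw [← conjTranspose_eq_transpose_of_trivial]; exact hSherm
  have hSdet : IsUnit S.det := by
    have : S.det * S.det = M.det := by rw [← det_mul, hS2]
    have hMdet := hM.det_pos
    refine isUnit_iff_ne_zero.mpr fun h => ?_
    rw [h, mul_zero] at this
    exact hMdet.ne' this.symm
  have hSS : S⁻¹ * S = 1 := nonsing_inv_mul S hSdet
  have hSS' : S * S⁻¹ = 1 := mul_nonsing_inv S hSdet
  have hMinv : M⁻¹ = S⁻¹ * S⁻¹ := by rw [← hS2, Matrix.mul_inv_rev]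
  have hSinvsymm : (S⁻¹)ᵀ = S⁻¹ := by rw [transpose_nonsing_inv, hSsymm]
  set A : Matrix (Fin n) (Fin n) ℝ := S⁻¹ * D * S⁻¹ with hAdef
  set B : Matrix (Fin n) (Fin n) ℝ := S⁻¹ * K * S⁻¹ with hBdef
  have hSinvherm : (S⁻¹)ᴴ = S⁻¹ := by
    rw [conjTranspose_eq_transpose_of_trivial, hSinvsymm]
  have hAherm : A.IsHermitian := by
    unfold A
    rw [Matrix.IsHermitian, conjTranspose_mul, conjTranspose_mul, hSinvherm, hD.isHermitian.eq]
    rw [Matrix.mul_assoc]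
  have hBherm : B.IsHermitian := by
    unfold B
    rw [Matrix.IsHermitian, conjTranspose_mul, conjTranspose_mul, hSinvherm, hK.isHermitian.eq]
    rw [Matrix.mul_assoc]
  have hABcomm : A * B = B * A := by
    have h1 : A * B = S⁻¹ * (D * M⁻¹ * K) * S⁻¹ := by
      unfold A B; rw [hMinv]; simp only [Matrix.mul_assoc]
    have h2 : B * A = S⁻¹ * (K * M⁻¹ * D) * S⁻¹ := by
      unfold A B; rw [hMinv]; simp only [Matrix.mul_assoc]
    rw [h1, h2, hmodal]
  -- pass to Euclidean space
  have hA'symm : (Matrix.toEuclideanLin A).IsSymmetric := isHermitian_iff_isSymmetric.mp hAherm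
  have hB'symm : (Matrix.toEuclideanLin B).IsSymmetric := isHermitian_iff_isSymmetric.mp hBherm
  have hA'B' : Commute (Matrix.toEuclideanLin A) (Matrix.toEuclideanLin B) := by
    rw [Commute, SemiconjBy]
    ext v i
    simp [Matrix.toEuclideanLin_apply, Matrix.mulVec_mulVec, hABcomm]
  have hn : Module.finrank ℝ (EuclideanSpace ℝ (Fin n)) = n := finrank_euclideanSpace_fin
  set V : ℝ × ℝ → Submodule ℝ (EuclideanSpace ℝ (Fin n)) :=
    fun i => Module.End.eigenspace (Matrix.toEuclideanLin A) i.2 ⊓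
      Module.End.eigenspace (Matrix.toEuclideanLin B) i.1 with hVdef
  have hInt : DirectSum.IsInternal V :=
    LinearMap.IsSymmetric.directSum_isInternal_of_commute hA'symm hB'symm hA'B'
  have hFam : OrthogonalFamily ℝ (fun i => V i) (fun i => (V i).subtypeₗᵢ) :=
    LinearMap.IsSymmetric.orthogonalFamily_eigenspace_inf_eigenspace hA'symm hB'symm
  have hIndep : iSupIndep V := hInt.submodule_iSupIndep
  haveI : Fintype {i : ℝ × ℝ // V i ≠ ⊥} := hIndep.fintypeNeBotOfFiniteDimensional
  have hInt' : DirectSum.IsInternal (fun i : {i : ℝ × ℝ // V i ≠ ⊥} => V i.val) := by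
    rw [DirectSum.isInternal_submodule_iff_iSupIndep_and_iSup_eq_top]
    refine ⟨hIndep.comp Subtype.val_injective, ?_⟩
    rw [eq_top_iff, ← hInt.submodule_iSup_eq_top]
    refine iSup_le fun i => ?_
    by_cases h : V i = ⊥
    · rw [h]; exact bot_le
    · exact le_iSup (fun i : {i : ℝ × ℝ // V i ≠ ⊥} => V i.val) ⟨i, h⟩
  have hFam' : OrthogonalFamily ℝ (fun i : {i : ℝ × ℝ // V i ≠ ⊥} => V i.val)
      (fun i => (V i.val).subtypeₗᵢ) := hFam.comp Subtype.val_injective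
  set b := hInt'.subordinateOrthonormalBasis hn hFam' with hbdef
  set σ : Fin n → ℝ × ℝ :=
    fun i => (hInt'.subordinateOrthonormalBasisIndex hn i hFam').val with hσdef
  have hmem : ∀ i, b i ∈ V (σ i) :=
    fun i => hInt'.subordinateOrthonormalBasis_subordinate hn i hFam'
  have hAb : ∀ i, Matrix.toEuclideanLin A (b i) = (σ i).2 • b i :=
    fun i => Module.End.mem_eigenspace_iff.mp (hmem i).1
  have hBb : ∀ i, Matrix.toEuclideanLin B (b i) = (σ i).1 • b i :=
    fun i => Module.End.mem_eigenspace_iff.mp (hmem i).2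
  set X₀ : Matrix (Fin n) (Fin n) ℝ := Matrix.of fun k i => b i k with hX₀def
  have hA1 : ∀ i k, (A *ᵥ fun j => b i j) k = (σ i).2 * b i k := by
    intro i k
    have h := congrFun (congrArg (WithLp.equiv 2 (Fin n → ℝ)) (hAb i)) k
    change (A *ᵥ WithLp.ofLp (b i)) k = WithLp.ofLp ((σ i).2 • b i) k at h
    simpa using h
  have hB1 : ∀ i k, (B *ᵥ fun j => b i j) k = (σ i).1 * b i k := by
    intro i k
    have h := congrFun (congrArg (WithLp.equiv 2 (Fin n → ℝ)) (hBb i)) k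
    change (B *ᵥ WithLp.ofLp (b i)) k = WithLp.ofLp ((σ i).1 • b i) k at h
    simpa using h
  have hAX₀ : A * X₀ = X₀ * Matrix.diagonal (fun i => (σ i).2) := by
    ext k i
    rw [Matrix.mul_apply, Matrix.mul_diagonal]
    calc ∑ j, A k j * X₀ j i = (A *ᵥ fun j => b i j) k := by
          simp [Matrix.mulVec, dotProduct, hX₀def]
      _ = (σ i).2 * b i k := hA1 i k
      _ = X₀ k i * (σ i).2 := mul_comm _ _
  have hBX₀ : B * X₀ = X₀ * Matrix.diagonal (fun i => (σ i).1) := by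
    ext k i
    rw [Matrix.mul_apply, Matrix.mul_diagonal]
    calc ∑ j, B k j * X₀ j i = (B *ᵥ fun j => b i j) k := by
          simp [Matrix.mulVec, dotProduct, hX₀def]
      _ = (σ i).1 * b i k := hB1 i k
      _ = X₀ k i * (σ i).1 := mul_comm _ _
  have hX₀orth : X₀ᵀ * X₀ = 1 := by
    ext i j
    rw [Matrix.mul_apply, Matrix.one_apply]
    have h := (orthonormal_iff_ite.mp b.orthonormal) i j
    rw [PiLp.inner_apply] at h
    simp only [RCLike.inner_apply, starRingEnd_apply, star_trivial] at h
    simp only [Matrix.transpose_apply, hX₀def, Matrix.of_apply]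
    rw [← h]; exact Finset.sum_congr rfl fun _ _ => mul_comm _ _
  refine ⟨S⁻¹ * X₀, fun i => (σ i).2, fun i => (σ i).1, ?_, ?_, ?_, ?_⟩
  · rw [det_mul]
    exact (isUnit_nonsing_inv_det S hSdet).mul (isUnit_det_of_left_inverse hX₀orth)
  · rw [hMinv]
    calc S⁻¹ * S⁻¹ * D * (S⁻¹ * X₀) = S⁻¹ * (A * X₀) := by
          unfold A; simp only [Matrix.mul_assoc]
      _ = S⁻¹ * X₀ * Matrix.diagonal (fun i => (σ i).2) := by
          rw [hAX₀]; simp only [Matrix.mul_assoc]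
  · rw [hMinv]
    calc S⁻¹ * S⁻¹ * K * (S⁻¹ * X₀) = S⁻¹ * (B * X₀) := by
          unfold B; simp only [Matrix.mul_assoc]
      _ = S⁻¹ * X₀ * Matrix.diagonal (fun i => (σ i).1) := by
          rw [hBX₀]; simp only [Matrix.mul_assoc]
  · intro i j hij
    have : (S⁻¹ * X₀)ᵀ * M * (S⁻¹ * X₀) = 1 := by
      rw [transpose_mul, hSinvsymm, ← hS2]
      calc X₀ᵀ * S⁻¹ * (S * S) * (S⁻¹ * X₀)
          = X₀ᵀ * ((S⁻¹ * S) * (S * S⁻¹)) * X₀ := by simp only [Matrix.mul_assoc]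
        _ = X₀ᵀ * X₀ := by rw [hSS, hSS']; simp
        _ = 1 := hX₀orth
    rw [this]
    exact Matrix.one_apply_ne hij
end

section
/- Let V ∈ ℂ^{n×r} have full column rank and contain the column v(σ) := (σ²M + σD + K)⁻¹B b for some point σ ∈ ℂ and direction b ∈ ℂᵐ. Define the reduced matrices M̂ = VᴴMV, D̂ = VᴴDV, K̂ = VᴴKV, B̂ = VᴴB and reduced transfer function Ĥ(s) = B̂ᴴ(s²M̂ + sD̂ + K̂)⁻¹B̂ with H(s) = Bᴴ(s²M + sD + K)⁻¹B. Then tangential interpolation holds: H(σ)b = Ĥ(σ)b, provided σ²M̂ + σD̂ + K̂ is invertible. -/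
open Matrix

/-- Tangential interpolation by Galerkin projection: if
`(σ²M + σD + K)⁻¹ B b ∈ range(V)` for a full-column-rank `V`, then the reduced
transfer function obtained by projection with `V` matches the full one
tangentially at `σ`: `H(σ)b = Ĥ(σ)b`. -/
theorem galerkin_tangential_interpolation {n r m : ℕ}
    (M D K : Matrix (Fin n) (Fin n) ℂ) (B : Matrix (Fin n) (Fin m) ℂ)
    (V : Matrix (Fin n) (Fin r) ℂ) (hV : V.rank = r)
    (σ : ℂ) (b : Fin m → ℂ)
    (hfull : IsUnit (σ ^ 2 • M + σ • D + K).det)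
    (hred : IsUnit (σ ^ 2 • (Vᴴ * M * V) + σ • (Vᴴ * D * V) + Vᴴ * K * V).det)
    (hrange : ∃ c : Fin r → ℂ,
      V.mulVec c = (σ ^ 2 • M + σ • D + K)⁻¹.mulVec (B.mulVec b)) :
    (Bᴴ * (σ ^ 2 • M + σ • D + K)⁻¹ * B).mulVec b
      = ((Vᴴ * B)ᴴ *
          (σ ^ 2 • (Vᴴ * M * V) + σ • (Vᴴ * D * V) + Vᴴ * K * V)⁻¹ *
          (Vᴴ * B)).mulVec b := by
  obtain ⟨c, hc⟩ := hrange
  set A := σ ^ 2 • M + σ • D + K with hA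
  have hhat : σ ^ 2 • (Vᴴ * M * V) + σ • (Vᴴ * D * V) + Vᴴ * K * V
      = Vᴴ * A * V := by
    simp [hA, Matrix.mul_add, Matrix.add_mul, Matrix.mul_smul, Matrix.smul_mul,
      Matrix.mul_assoc]
  rw [hhat] at hred ⊢
  -- Â c = Vᴴ B b
  have key : (Vᴴ * A * V).mulVec c = (Vᴴ * B).mulVec b := by
    have : (Vᴴ * A).mulVec (V.mulVec c) = (Vᴴ * A).mulVec (A⁻¹.mulVec (B.mulVec b)) := by
      rw [hc]
    simpa [Matrix.mulVec_mulVec, Matrix.mul_assoc,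
      Matrix.mul_nonsing_inv_cancel_left _ _ hfull] using this
  have hcinv : (Vᴴ * A * V)⁻¹.mulVec ((Vᴴ * B).mulVec b) = c := by
    rw [← key, Matrix.mulVec_mulVec, Matrix.nonsing_inv_mul _ hred, Matrix.one_mulVec]
  calc (Bᴴ * A⁻¹ * B).mulVec b
      = Bᴴ.mulVec (A⁻¹.mulVec (B.mulVec b)) := by
        rw [Matrix.mulVec_mulVec, Matrix.mulVec_mulVec]
    _ = Bᴴ.mulVec (V.mulVec c) := by rw [hc]
    _ = (Bᴴ * V).mulVec ((Vᴴ * A * V)⁻¹.mulVec ((Vᴴ * B).mulVec b)) := by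
        rw [hcinv, Matrix.mulVec_mulVec]
    _ = ((Vᴴ * B)ᴴ * (Vᴴ * A * V)⁻¹ * (Vᴴ * B)).mulVec b := by
        rw [conjTranspose_mul, conjTranspose_conjTranspose,
          Matrix.mulVec_mulVec, Matrix.mulVec_mulVec, Matrix.mul_assoc]
end
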